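/- Let n ≥ 2, η_n > 0, and 1/2 ≤ δ < 1. Let a_{n,S}* be the unique nonnegative solution of Φ(n^{1/2}(a − η_n)) − Φ(n^{1/2}(−a − η_n)) = δ and let a_{n,S}** be the unique nonnegative solution of T_{n−1}(n^{1/2}(a − η_n)) − T_{n−1}(n^{1/2}(−a − η_n)) = δ. Then a_{n,S}** ≥ a_{n,S}*. -/

import Mathlib

open MeasureTheory ProbabilityTheory Filter
open scoped NNReal

/-- Standard normal cumulative distribution function Φ. -/
noncomputable def stdNormCDF (x : ℝ) : ℝ :=
  ((gaussianReal 0 1) (Set.Iic x)).toReal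

/-- Soft-thresholding (LASSO) estimator with threshold η, as a function of ȳ. -/
noncomputable def softThresh (η y : ℝ) : ℝ := Real.sign y * max (|y| - η) 0

/-- Hard-thresholding estimator with threshold η, as a function of ȳ. -/
noncomputable def hardThresh (η y : ℝ) : ℝ := if η < |y| then y else 0

/-- Adaptive LASSO estimator with tuning parameter η, as a function of ȳ. -/
noncomputable def adaLasso (η y : ℝ) : ℝ := if |y| ≤ η then 0 else y - η ^ 2 / y

/-- Coverage probability `P_{n,θ}(θ ∈ [est(ȳ) - a, est(ȳ) + b])` in the
known-variance case (σ = 1), where ȳ ~ N(θ, 1/n). -/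
noncomputable def cover (n : ℕ) (est : ℝ → ℝ) (a b θ : ℝ) : ℝ :=
  ((gaussianReal θ ((n : ℝ≥0))⁻¹)
    {y : ℝ | est y - a ≤ θ ∧ θ ≤ est y + b}).toReal

/-- The distribution of `σ̂ = sqrt(Q/(n-1))` where `Q ~ χ²_{n-1}`; i.e. the law of the
square root of a chi-square random variable with `n-1` degrees of freedom divided by
`n - 1` (whose density is `h_n`). The chi-square distribution with `k` degrees of
freedom is the Gamma distribution with shape `k/2` and rate `1/2`. -/
noncomputable def sigmaHatLaw (n : ℕ) : Measure ℝ :=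
  (gammaMeasure (((n : ℝ) - 1) / 2) (1 / 2)).map
    (fun q => Real.sqrt (q / ((n : ℝ) - 1)))

/-- The cumulative distribution function `T_{n-1}` of the Student t-distribution with
`n-1` degrees of freedom, via `T_{n-1}(x) = ∫₀^∞ Φ(s x) h_n(s) ds`. -/
noncomputable def studentCDF (n : ℕ) (x : ℝ) : ℝ :=
  ∫ s, stdNormCDF (s * x) ∂(sigmaHatLaw n)

/-- Coverage probability `P_{n,θ}(θ ∈ [est(σ̂, ȳ) - σ̂ a, est(σ̂, ȳ) + σ̂ a])` in the
unknown-variance case (true σ = 1): `ȳ ~ N(θ, 1/n)` and `σ̂` (independent of `ȳ`) has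
law `sigmaHatLaw n`; here `est s y` is the feasible estimator computed from `ȳ = y` and
`σ̂ = s`. -/
noncomputable def coverUV (n : ℕ) (est : ℝ → ℝ → ℝ) (a θ : ℝ) : ℝ :=
  (((gaussianReal θ ((n : ℝ≥0))⁻¹).prod (sigmaHatLaw n))
    {p : ℝ × ℝ | est p.2 p.1 - p.2 * a ≤ θ ∧ θ ≤ est p.2 p.1 + p.2 * a}).toReal
section Aux
open Real Set
open scoped ENNReal

noncomputable def phi (x : ℝ) : ℝ := gaussianPDFReal 0 1 x

lemma phi_pos (x : ℝ) : 0 < phi x := gaussianPDFReal_pos 0 1 x one_ne_zero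

lemma continuous_phi : Continuous phi := by
  unfold phi gaussianPDFReal
  fun_prop

lemma stdNormCDF_nonneg (x : ℝ) : 0 ≤ stdNormCDF x := ENNReal.toReal_nonneg

lemma stdNormCDF_le_one (x : ℝ) : stdNormCDF x ≤ 1 := by
  unfold stdNormCDF
  rw [← ENNReal.toReal_one]
  exact ENNReal.toReal_mono ENNReal.one_ne_top (prob_le_one)

lemma stdNormCDF_mono : Monotone stdNormCDF := by
  intro x y h
  exact ENNReal.toReal_mono (measure_ne_top _ _) (measure_mono (Set.Iic_subset_Iic.2 h))

lemma measurable_stdNormCDF : Measurable stdNormCDF := stdNormCDF_mono.measurable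

lemma stdNormCDF_sub (a b : ℝ) (hab : a ≤ b) :
    stdNormCDF b - stdNormCDF a = ∫ x in Set.Ioc a b, phi x := by
  have hu : Set.Iic a ∪ Set.Ioc a b = Set.Iic b := Set.Iic_union_Ioc_eq_Iic hab
  have hd : Disjoint (Set.Iic a) (Set.Ioc a b) := by
    simp only [Set.disjoint_left, Set.mem_Iic, Set.mem_Ioc, not_and]
    intro x hx h1
    linarith
  have hm : (gaussianReal 0 1) (Set.Iic b)
      = (gaussianReal 0 1) (Set.Iic a) + (gaussianReal 0 1) (Set.Ioc a b) := by
    rw [← hu, measure_union hd measurableSet_Ioc]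
  have hint : (gaussianReal 0 1) (Set.Ioc a b)
      = ENNReal.ofReal (∫ x in Set.Ioc a b, phi x) :=
    gaussianReal_apply_eq_integral 0 one_ne_zero _
  have hnn : 0 ≤ ∫ x in Set.Ioc a b, phi x :=
    setIntegral_nonneg measurableSet_Ioc (fun x _ => (phi_pos x).le)
  unfold stdNormCDF
  rw [hm, ENNReal.toReal_add (measure_ne_top _ _) (measure_ne_top _ _), hint,
    ENNReal.toReal_ofReal hnn]
  ring

lemma stdNormCDF_strictMono : StrictMono stdNormCDF := by
  intro a b hab
  have h := stdNormCDF_sub a b hab.le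
  have hpos : 0 < ∫ x in Set.Ioc a b, phi x := by
    rw [setIntegral_pos_iff_support_of_nonneg_ae]
    · have : Function.support phi ∩ Set.Ioc a b = Set.Ioc a b := by
        ext x; simp [Function.support, (phi_pos x).ne']
      rw [this]
      simp [Real.volume_Ioc, hab]
    · filter_upwards with x using (phi_pos x).le
    · exact (continuous_phi.integrableOn_Ioc)
  linarith

lemma gaussian_symm (x : ℝ) :
    (gaussianReal 0 1) (Set.Iic (-x)) = (gaussianReal 0 1) (Set.Ici x) := by
  have h := gaussianReal_map_const_mul (μ := 0) (v := 1) (-1 : ℝ)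
  have h2 : (⟨(-1:ℝ)^2, sq_nonneg _⟩ : ℝ≥0) * 1 = 1 := by
    ext; norm_num
  replace h : (gaussianReal 0 1).map (fun y => (-1:ℝ) * y) = gaussianReal 0 1 := by
    rw [h]; congr 1
    · simp
  have hmeas : Measurable fun y : ℝ => (-1 : ℝ) * y := by fun_prop
  calc (gaussianReal 0 1) (Set.Iic (-x))
      = ((gaussianReal 0 1).map (fun y => (-1:ℝ) * y)) (Set.Iic (-x)) := by rw [h]
    _ = (gaussianReal 0 1) ((fun y => (-1:ℝ) * y) ⁻¹' (Set.Iic (-x))) :=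
        Measure.map_apply hmeas measurableSet_Iic
    _ = (gaussianReal 0 1) (Set.Ici x) := by
        congr 1
        ext y
        simp only [Set.mem_preimage, Set.mem_Iic, Set.mem_Ici]
        constructor <;> intro h <;> linarith

lemma stdNormCDF_neg (x : ℝ) : stdNormCDF (-x) = 1 - stdNormCDF x := by
  have hsing : (gaussianReal 0 1) {x} = 0 := by
    refine (gaussianReal_absolutelyContinuous 0 one_ne_zero) ?_
    simp
  have h1 : (gaussianReal 0 1) (Set.Iic x) + (gaussianReal 0 1) (Set.Ici x)
      = 1 + (gaussianReal 0 1) {x} := by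
    rw [← measure_union_add_inter (Set.Iic x) measurableSet_Ici]
    simp [Set.Iic_union_Ici, Set.Iic_inter_Ici, Set.Icc_self]
  rw [hsing, add_zero] at h1
  have := congrArg ENNReal.toReal h1
  rw [ENNReal.toReal_add (measure_ne_top _ _) (measure_ne_top _ _)] at this
  unfold stdNormCDF
  rw [gaussian_symm]
  simp at this
  linarith

lemma stdNormCDF_zero : stdNormCDF 0 = 1/2 := by
  have := stdNormCDF_neg 0
  rw [neg_zero] at this
  linarith

lemma stdNormCDF_eq_integral (x : ℝ) :
    stdNormCDF x = 1/2 + ∫ t in (0:ℝ)..x, phi t := by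
  rcases le_or_gt 0 x with hx | hx
  · rw [intervalIntegral.integral_of_le hx, ← stdNormCDF_sub 0 x hx, stdNormCDF_zero]
    ring
  · rw [intervalIntegral.integral_of_ge hx.le, ← stdNormCDF_sub x 0 hx.le, stdNormCDF_zero]
    ring

lemma hasDerivAt_stdNormCDF (x : ℝ) : HasDerivAt stdNormCDF (phi x) x := by
  have h := (continuous_phi.integral_hasStrictDerivAt 0 x).hasDerivAt
  have : stdNormCDF = fun u => 1/2 + ∫ t in (0:ℝ)..u, phi t := funext stdNormCDF_eq_integral
  rw [this]
  simpa using h.const_add (1/2 : ℝ)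

lemma continuous_stdNormCDF : Continuous stdNormCDF :=
  continuous_iff_continuousAt.2 fun x => (hasDerivAt_stdNormCDF x).continuousAt

lemma phi_antitoneOn : AntitoneOn phi (Set.Ici 0) := by
  intro a ha b hb hab
  simp only [Set.mem_Ici] at ha hb
  unfold phi gaussianPDFReal
  simp only [mul_one, sub_zero, NNReal.coe_one]
  have hc : (0:ℝ) < (Real.sqrt (2 * π))⁻¹ := by positivity
  have hexp : Real.exp (-b^2/2) ≤ Real.exp (-a^2/2) := by
    apply Real.exp_le_exp.2
    nlinarith
  exact mul_le_mul_of_nonneg_left hexp hc.le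

lemma concaveOn_stdNormCDF_mul (u : ℝ) (hu : 0 ≤ u) :
    ConcaveOn ℝ (Set.Ici 0) (fun s => stdNormCDF (s * u)) := by
  apply AntitoneOn.concaveOn_of_deriv (convex_Ici 0)
    (Continuous.continuousOn (continuous_stdNormCDF.comp (by fun_prop)))
  · intro s hs
    exact ((hasDerivAt_stdNormCDF (s*u)).comp s ((hasDerivAt_id s).mul_const u)).differentiableAt.differentiableWithinAt
  · have hderiv : ∀ s : ℝ, deriv (fun s => stdNormCDF (s * u)) s = phi (s * u) * u := by
      intro s
      have := (hasDerivAt_stdNormCDF (s*u)).comp s ((hasDerivAt_id s).mul_const u)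
      simpa [Function.comp_def] using this.deriv
    intro a ha b hb hab
    simp only [Function.comp_def]
    rw [hderiv, hderiv]
    rw [interior_Ici, Set.mem_Ioi] at ha hb
    have : phi (b * u) ≤ phi (a * u) := by
      apply phi_antitoneOn
      · exact Set.mem_Ici.2 (mul_nonneg ha.le hu)
      · exact Set.mem_Ici.2 (mul_nonneg hb.le hu)
      · exact mul_le_mul_of_nonneg_right hab hu
    nlinarith [phi_pos (a*u), phi_pos (b*u)]

section GammaFacts
variable {a r : ℝ}

lemma integrable_mul_gammaPDFReal (ha : 0 < a) (hr : 0 < r) :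
    Integrable (fun x => gammaPDFReal a r x * x) := by
  have h1 : IntegrableOn (fun x : ℝ => x ^ a * Real.exp (-r * x ^ (1:ℝ))) (Set.Ioi 0) :=
    integrableOn_rpow_mul_exp_neg_mul_rpow (by linarith) one_pos hr
  have h1' : IntegrableOn (fun x : ℝ => (r ^ a / Real.Gamma a) * (x ^ a * Real.exp (-r * x ^ (1:ℝ)))) (Set.Ioi 0) :=
    h1.const_mul _
  have h2 : IntegrableOn (fun x => gammaPDFReal a r x * x) (Set.Ioi 0) := by
    apply MeasureTheory.IntegrableOn.congr_fun h1' ?_ measurableSet_Ioi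
    intro x hx
    rw [Set.mem_Ioi] at hx
    simp only [gammaPDFReal, if_pos hx.le, Real.rpow_one]
    rw [show a = (a - 1) + 1 by ring, Real.rpow_add hx, Real.rpow_one]
    ring
  apply h2.integrable_of_forall_notMem_eq_zero
  intro x hx
  rw [Set.mem_Ioi, not_lt] at hx
  rcases lt_or_eq_of_le hx with h | h
  · simp only [gammaPDFReal, if_neg (not_le.2 h)]; ring
  · simp [h]

lemma integral_mul_gammaPDFReal (ha : 0 < a) (hr : 0 < r) :
    ∫ x, gammaPDFReal a r x * x = a / r := by
  rw [← setIntegral_eq_integral_of_forall_compl_eq_zero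
    (s := Set.Ioi (0:ℝ)) (μ := volume) ?hzero]
  · have hcong : ∫ x in Set.Ioi (0:ℝ), gammaPDFReal a r x * x
        = ∫ x in Set.Ioi (0:ℝ), (r ^ a / Real.Gamma a) * (x ^ ((a+1)-1) * Real.exp (-(r * x))) := by
      apply setIntegral_congr_fun measurableSet_Ioi
      intro x hx
      rw [Set.mem_Ioi] at hx
      simp only [gammaPDFReal, if_pos hx.le]
      rw [show (a+1)-1 = (a - 1) + 1 by ring, Real.rpow_add hx, Real.rpow_one]
      ring
    rw [hcong, integral_const_mul, integral_rpow_mul_exp_neg_mul_Ioi (by linarith) hr]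
    have hG : Real.Gamma (a + 1) = a * Real.Gamma a := Real.Gamma_add_one ha.ne'
    have hGpos : 0 < Real.Gamma a := Real.Gamma_pos_of_pos ha
    rw [hG]
    have h1r : (1/r) ^ (a+1) = r⁻¹ ^ (a+1) := by rw [one_div]
    have h2 : r ^ a * r⁻¹ ^ (a+1) = r⁻¹ := by
      rw [Real.inv_rpow hr.le, ← Real.rpow_neg hr.le, ← Real.rpow_add hr,
        show a + -(a+1) = -1 by ring, Real.rpow_neg_one]
    have key : r ^ a / Real.Gamma a * (r⁻¹ ^ (a + 1) * (a * Real.Gamma a))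
        = (r ^ a * r⁻¹ ^ (a+1)) * a * (Real.Gamma a / Real.Gamma a) := by ring
    rw [h1r, key, h2, div_self hGpos.ne']
    field_simp
  case hzero =>
    intro x hx
    rw [Set.mem_Ioi, not_lt] at hx
    rcases lt_or_eq_of_le hx with h | h
    · simp only [gammaPDFReal, if_neg (not_le.2 h)]; ring
    · simp [h]

lemma gammaPDF_eq_coe (a r : ℝ) :
    gammaPDF a r = fun x => ((gammaPDFReal a r x).toNNReal : ℝ≥0∞) := rfl

lemma integrable_id_gammaMeasure (ha : 0 < a) (hr : 0 < r) :
    Integrable (fun x => x) (gammaMeasure a r) := by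
  rw [gammaMeasure, gammaPDF_eq_coe,
    integrable_withDensity_iff_integrable_smul ((measurable_gammaPDFReal a r).real_toNNReal)]
  have : (fun x => ((gammaPDFReal a r x).toNNReal : ℝ≥0) • x) = fun x => gammaPDFReal a r x * x := by
    funext x
    rw [NNReal.smul_def, Real.coe_toNNReal _ (gammaPDFReal_nonneg ha hr x), smul_eq_mul]
  rw [this]
  exact integrable_mul_gammaPDFReal ha hr

lemma integral_id_gammaMeasure (ha : 0 < a) (hr : 0 < r) :
    ∫ x, x ∂(gammaMeasure a r) = a / r := by
  rw [gammaMeasure, gammaPDF_eq_coe,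
    integral_withDensity_eq_integral_smul ((measurable_gammaPDFReal a r).real_toNNReal)]
  have : (fun x => ((gammaPDFReal a r x).toNNReal : ℝ≥0) • x) = fun x => gammaPDFReal a r x * x := by
    funext x
    rw [NNReal.smul_def, Real.coe_toNNReal _ (gammaPDFReal_nonneg ha hr x), smul_eq_mul]
  rw [this]
  exact integral_mul_gammaPDFReal ha hr

lemma gammaMeasure_Iic_zero (ha : 0 < a) (hr : 0 < r) :
    gammaMeasure a r (Set.Iic 0) = 0 := by
  rw [gammaMeasure, withDensity_apply _ measurableSet_Iic]
  have hu : Set.Iic (0:ℝ) = Set.Iio 0 ∪ {0} := by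
    ext x; simp [le_iff_lt_or_eq]
  rw [hu, lintegral_union (measurableSet_singleton 0) (by simp),
    lintegral_gammaPDF_of_nonpos le_rfl,
    setLIntegral_measure_zero _ _ Real.volume_singleton]
  simp

lemma gammaMeasure_ae_pos (ha : 0 < a) (hr : 0 < r) :
    ∀ᵐ q ∂(gammaMeasure a r), 0 < q := by
  rw [MeasureTheory.ae_iff]
  have : {q : ℝ | ¬ 0 < q} = Set.Iic 0 := by ext x; simp
  rw [this]
  exact gammaMeasure_Iic_zero ha hr

end GammaFacts


section SigmaHat
variable {n : ℕ} (hn : 2 ≤ n)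
include hn

lemma n_sub_one_pos : (0:ℝ) < (n:ℝ) - 1 := by
  have : (2:ℝ) ≤ n := by exact_mod_cast hn
  linarith

lemma shape_pos : (0:ℝ) < ((n:ℝ) - 1) / 2 := by linarith [n_sub_one_pos hn]

lemma measurable_sqrtDiv : Measurable (fun q : ℝ => Real.sqrt (q / ((n : ℝ) - 1))) := by
  fun_prop

lemma isProbabilityMeasure_sigmaHatLaw : IsProbabilityMeasure (sigmaHatLaw n) := by
  have := isProbabilityMeasure_gammaMeasure (shape_pos hn) (by norm_num : (0:ℝ) < 1/2)
  exact MeasureTheory.Measure.isProbabilityMeasure_map (measurable_sqrtDiv hn).aemeasurable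

lemma sigmaHatLaw_ae_pos : ∀ᵐ s ∂(sigmaHatLaw n), 0 < s := by
  rw [sigmaHatLaw, MeasureTheory.ae_map_iff (measurable_sqrtDiv hn).aemeasurable
    measurableSet_Ioi]
  filter_upwards [gammaMeasure_ae_pos (shape_pos hn) (by norm_num : (0:ℝ) < 1/2)] with q hq
  exact Real.sqrt_pos.2 (div_pos hq (n_sub_one_pos hn))

lemma sigmaHatLaw_ae_nonneg : ∀ᵐ s ∂(sigmaHatLaw n), 0 ≤ s := by
  filter_upwards [sigmaHatLaw_ae_pos hn] with s hs using hs.le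

lemma integrable_sqrt_gamma :
    Integrable (fun q : ℝ => Real.sqrt (q / ((n:ℝ)-1)))
      (gammaMeasure (((n : ℝ) - 1) / 2) (1 / 2)) := by
  have hgam := isProbabilityMeasure_gammaMeasure (shape_pos hn) (by norm_num : (0:ℝ) < 1/2)
  have hint : Integrable (fun q : ℝ => (1 + q / ((n:ℝ)-1)) / 2)
      (gammaMeasure (((n : ℝ) - 1) / 2) (1 / 2)) := by
    apply Integrable.div_const
    exact (integrable_const 1).add
      ((integrable_id_gammaMeasure (shape_pos hn) (by norm_num)).div_const _)
  apply hint.mono'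
  · exact ((measurable_sqrtDiv hn)).aestronglyMeasurable
  · filter_upwards [gammaMeasure_ae_pos (shape_pos hn) (by norm_num : (0:ℝ) < 1/2)] with q hq
    have ht : 0 ≤ q / ((n:ℝ)-1) := (div_pos hq (n_sub_one_pos hn)).le
    rw [Real.norm_eq_abs, abs_of_nonneg (Real.sqrt_nonneg _)]
    nlinarith [Real.sq_sqrt ht, Real.sqrt_nonneg (q / ((n:ℝ)-1)),
      sq_nonneg (Real.sqrt (q / ((n:ℝ)-1)) - 1)]

lemma integrable_id_sigmaHatLaw : Integrable (fun s => s) (sigmaHatLaw n) := by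
  rw [sigmaHatLaw]
  exact (integrable_map_measure measurable_id.aestronglyMeasurable
    (measurable_sqrtDiv hn).aemeasurable).mpr (integrable_sqrt_gamma hn)

lemma integral_id_sigmaHatLaw_le : ∫ s, s ∂(sigmaHatLaw n) ≤ 1 := by
  have hgam := isProbabilityMeasure_gammaMeasure (shape_pos hn) (by norm_num : (0:ℝ) < 1/2)
  have hmap : (∫ s, s ∂(sigmaHatLaw n))
      = ∫ q, Real.sqrt (q / ((n:ℝ)-1)) ∂(gammaMeasure (((n : ℝ) - 1) / 2) (1 / 2)) := by
    rw [sigmaHatLaw]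
    exact integral_map (measurable_sqrtDiv hn).aemeasurable
      measurable_id.aestronglyMeasurable
  rw [hmap]
  have hint : Integrable (fun q : ℝ => (1 + q / ((n:ℝ)-1)) / 2)
      (gammaMeasure (((n : ℝ) - 1) / 2) (1 / 2)) := by
    apply Integrable.div_const
    exact (integrable_const 1).add
      ((integrable_id_gammaMeasure (shape_pos hn) (by norm_num)).div_const _)
  have hle : ∫ q, Real.sqrt (q / ((n:ℝ)-1)) ∂(gammaMeasure (((n : ℝ) - 1) / 2) (1 / 2))
      ≤ ∫ q, (1 + q / ((n:ℝ)-1)) / 2 ∂(gammaMeasure (((n : ℝ) - 1) / 2) (1 / 2)) := by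
    apply integral_mono_ae (integrable_sqrt_gamma hn) hint
    filter_upwards [gammaMeasure_ae_pos (shape_pos hn) (by norm_num : (0:ℝ) < 1/2)] with q hq
    have ht : 0 ≤ q / ((n:ℝ)-1) := (div_pos hq (n_sub_one_pos hn)).le
    nlinarith [Real.sq_sqrt ht, Real.sqrt_nonneg (q / ((n:ℝ)-1)),
      sq_nonneg (Real.sqrt (q / ((n:ℝ)-1)) - 1)]
  have hval : ∫ q, (1 + q / ((n:ℝ)-1)) / 2 ∂(gammaMeasure (((n : ℝ) - 1) / 2) (1 / 2)) = 1 := by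
    rw [integral_div]
    rw [integral_add (integrable_const 1)
      ((integrable_id_gammaMeasure (shape_pos hn) (by norm_num)).div_const _)]
    rw [integral_div, integral_id_gammaMeasure (shape_pos hn) (by norm_num)]
    rw [integral_const]
    simp
    field_simp
    rw [div_self (n_sub_one_pos hn).ne']
    norm_num
  linarith

end SigmaHat


section Student
variable {n : ℕ} (hn : 2 ≤ n)
include hn

lemma integrable_studentInt (x : ℝ) :
    Integrable (fun s => stdNormCDF (s * x)) (sigmaHatLaw n) := by
  have := isProbabilityMeasure_sigmaHatLaw hn
  apply (integrable_const (1:ℝ)).mono'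
  · exact (continuous_stdNormCDF.comp
      (continuous_id.mul continuous_const)).aestronglyMeasurable
  · filter_upwards with s
    rw [Real.norm_eq_abs, abs_of_nonneg (stdNormCDF_nonneg _)]
    exact stdNormCDF_le_one _

lemma studentCDF_nonneg (x : ℝ) : 0 ≤ studentCDF n x :=
  integral_nonneg fun s => stdNormCDF_nonneg _

lemma studentCDF_le (u : ℝ) (hu : 0 ≤ u) : studentCDF n u ≤ stdNormCDF u := by
  have hprob := isProbabilityMeasure_sigmaHatLaw hn
  have hJ := ConcaveOn.le_map_integral (μ := sigmaHatLaw n) (f := fun s : ℝ => s)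
    (concaveOn_stdNormCDF_mul u hu)
    (continuous_stdNormCDF.comp (continuous_id.mul continuous_const)).continuousOn
    isClosed_Ici (sigmaHatLaw_ae_nonneg hn) (integrable_id_sigmaHatLaw hn)
    (integrable_studentInt hn u)
  refine le_trans hJ ?_
  apply stdNormCDF_mono
  calc (∫ s, s ∂(sigmaHatLaw n)) * u ≤ 1 * u :=
        mul_le_mul_of_nonneg_right (integral_id_sigmaHatLaw_le hn) hu
    _ = u := one_mul u

lemma studentCDF_neg_eq (x : ℝ) : studentCDF n (-x) = 1 - studentCDF n x := by
  have hprob := isProbabilityMeasure_sigmaHatLaw hn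
  unfold studentCDF
  have hpt : ∀ s : ℝ, stdNormCDF (s * (-x)) = 1 - stdNormCDF (s * x) := by
    intro s
    rw [show s * (-x) = -(s * x) by ring, stdNormCDF_neg]
  simp_rw [hpt]
  rw [integral_sub (integrable_const 1) (integrable_studentInt hn x)]
  simp

lemma studentCDF_ge (v : ℝ) (hv : v ≤ 0) : stdNormCDF v ≤ studentCDF n v := by
  have h1 : studentCDF n v = 1 - studentCDF n (-v) := by
    rw [show v = -(-v) by ring, studentCDF_neg_eq hn]
    simp
  have h2 : studentCDF n (-v) ≤ stdNormCDF (-v) := studentCDF_le hn (-v) (by linarith)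
  rw [stdNormCDF_neg] at h2
  linarith [h1, h2]

lemma studentCDF_lt_half (u : ℝ) (hu : u < 0) : studentCDF n u < 1/2 := by
  have hprob := isProbabilityMeasure_sigmaHatLaw hn
  set f : ℝ → ℝ := fun s => 1/2 - stdNormCDF (s * u) with hf
  have hfi : Integrable f (sigmaHatLaw n) :=
    (integrable_const (1/2 : ℝ)).sub (integrable_studentInt hn u)
  have hae : ∀ᵐ s ∂(sigmaHatLaw n), s ∈ Function.support f := by
    filter_upwards [sigmaHatLaw_ae_pos hn] with s hs
    have hlt : stdNormCDF (s * u) < 1/2 := by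
      rw [← stdNormCDF_zero]
      exact stdNormCDF_strictMono (by nlinarith)
    simp only [Function.mem_support, hf]
    intro h0
    linarith [sub_eq_zero.mp h0]
  have hcompl : (sigmaHatLaw n) (Function.support f)ᶜ = 0 := by
    have := MeasureTheory.ae_iff.mp hae
    exact this
  have hsupp : 0 < (sigmaHatLaw n) (Function.support f) := by
    rw [pos_iff_ne_zero]
    intro h0
    have hle : (sigmaHatLaw n) Set.univ
        ≤ (sigmaHatLaw n) (Function.support f) + (sigmaHatLaw n) (Function.support f)ᶜ := by
      rw [← Set.union_compl_self (Function.support f)]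
      exact measure_union_le _ _
    rw [h0, hcompl, measure_univ] at hle
    simp at hle
  have hpos : 0 < ∫ s, f s ∂(sigmaHatLaw n) := by
    rw [integral_pos_iff_support_of_nonneg_ae ?_ hfi]
    · exact hsupp
    · filter_upwards [sigmaHatLaw_ae_nonneg hn] with s hs
      have : stdNormCDF (s * u) ≤ 1/2 := by
        rw [← stdNormCDF_zero]
        apply stdNormCDF_mono
        nlinarith
      simp only [hf, Pi.zero_apply]
      linarith
  have hval : ∫ s, f s ∂(sigmaHatLaw n) = 1/2 - studentCDF n u := by
    rw [hf]
    rw [integral_sub (integrable_const (1/2 : ℝ)) (integrable_studentInt hn u)]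
    simp [studentCDF]
  rw [hval] at hpos
  linarith

end Student


end Aux

/-- For `1/2 ≤ δ < 1`, the half-length `a**` of the symmetric δ-level interval in the
unknown-variance case is at least the half-length `a*` in the known-variance case. -/
theorem stmt_14 (n : ℕ) (hn : 2 ≤ n) (η : ℝ) (hη : 0 < η) (δ : ℝ) (hδ0 : 1 / 2 ≤ δ)
    (hδ1 : δ < 1) (astar astar2 : ℝ) (hastar : 0 ≤ astar) (hastar2 : 0 ≤ astar2)
    (heq : stdNormCDF (Real.sqrt n * (astar - η)) -
      stdNormCDF (Real.sqrt n * (-astar - η)) = δ)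
    (heq2 : studentCDF n (Real.sqrt n * (astar2 - η)) -
      studentCDF n (Real.sqrt n * (-astar2 - η)) = δ) :
    astar2 ≥ astar := by
  have hnpos : (0:ℝ) < Real.sqrt n := by
    apply Real.sqrt_pos.2
    have : (2:ℝ) ≤ n := by exact_mod_cast hn
    linarith
  set u1 := Real.sqrt n * (astar - η) with hu1
  set v1 := Real.sqrt n * (-astar - η) with hv1
  set u2 := Real.sqrt n * (astar2 - η) with hu2
  set v2 := Real.sqrt n * (-astar2 - η) with hv2
  have hv2neg : v2 ≤ 0 := by
    rw [hv2]
    apply mul_nonpos_of_nonneg_of_nonpos hnpos.le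
    linarith
  -- u2 ≥ 0
  have hu2nonneg : 0 ≤ u2 := by
    by_contra h
    push_neg at h
    have h1 : studentCDF n u2 < 1/2 := studentCDF_lt_half hn u2 h
    have h2 : 0 ≤ studentCDF n v2 := studentCDF_nonneg (hn := hn) v2
    linarith [heq2]
  have key : δ ≤ stdNormCDF u2 - stdNormCDF v2 := by
    have h1 : studentCDF n u2 ≤ stdNormCDF u2 := studentCDF_le hn u2 hu2nonneg
    have h2 : stdNormCDF v2 ≤ studentCDF n v2 := studentCDF_ge hn v2 hv2neg
    linarith [heq2]
  by_contra hcon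
  push_neg at hcon
  have hu : u2 < u1 := by
    rw [hu1, hu2]
    apply mul_lt_mul_of_pos_left _ hnpos
    linarith
  have hv : v1 < v2 := by
    rw [hv1, hv2]
    apply mul_lt_mul_of_pos_left _ hnpos
    linarith
  have h1 : stdNormCDF u2 < stdNormCDF u1 := stdNormCDF_strictMono hu
  have h2 : stdNormCDF v1 < stdNormCDF v2 := stdNormCDF_strictMono hv
  linarith [heq]
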